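/- Let $p$ be prime, $t \geq 1$, $c \geq 0$, and let $\lambda(0)=0$, $\lambda(i+1)=\lambda(i)+\lfloor i/t\rfloor-\lfloor i/(pt)\rfloor$. For integers $k \geq 2$ and $n_k = (k-1)p^{c+1}t$, and any integer $i$ with $0 \leq i \leq t$, we have $\lambda(n_k) - \lambda(n_k - i) \leq (k-1)\varphi(p^{c+1}) \cdot i$, i.e., the slopes of $\lambda$ just below $n_k$ are at most $(k-1)\varphi(p^{c+1})$. -/

import Mathlib

/-- Slope estimate just below `n_k = (k-1)p^{c+1}t` for the Newton polygon sequence `λ`: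
for `0 ≤ i ≤ t`, `λ(n_k) - λ(n_k - i) ≤ (k-1) φ(p^{c+1}) i`. -/
theorem stmt_3 (p t c : ℕ) (hp : p.Prime) (ht : 1 ≤ t)
    (lam : ℕ → ℕ) (h0 : lam 0 = 0)
    (hrec : ∀ i, lam (i + 1) = lam i + i / t - i / (p * t))
    (k : ℕ) (hk : 2 ≤ k) (i : ℕ) (hi : i ≤ t) :
    (lam ((k - 1) * p ^ (c + 1) * t) : ℤ) - lam ((k - 1) * p ^ (c + 1) * t - i)
      ≤ (k - 1 : ℤ) * Nat.totient (p ^ (c + 1)) * i := by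
  have hp2 := hp.two_le
  set A := (k - 1) * p ^ (c + 1) with hA
  set B := (k - 1) * p ^ c with hB
  have hAB : A = p * B := by rw [hA, hB, pow_succ]; ring
  have hB1 : 1 ≤ B := Nat.one_le_iff_ne_zero.mpr (by
    have : 0 < B := Nat.mul_pos (by omega) (Nat.pow_pos (by omega))
    omega)
  have hBA : B ≤ A := by
    rw [hAB]; nlinarith
  have hA1 : 1 ≤ A := le_trans hB1 hBA
  have ht0 : 0 < t := ht
  have hpt0 : 0 < p * t := Nat.mul_pos (by omega) ht0
  -- key step bound
  have key : ∀ j, A * t - t ≤ j → j < A * t → j / t - j / (p * t) ≤ A - B := by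
    intro j hjl hju
    have h1 : j / t < A := (Nat.div_lt_iff_lt_mul ht0).mpr hju
    have h2 : B - 1 ≤ j / (p * t) := by
      rw [Nat.le_div_iff_mul_le hpt0]
      obtain ⟨D, hD⟩ : ∃ D, B = D + 1 := ⟨B - 1, by omega⟩
      have h3 : D * (p * t) + t ≤ A * t := by
        rw [hAB, hD]; nlinarith
      have h4 : D * (p * t) ≤ j :=
        le_trans (Nat.le_sub_of_add_le h3) hjl
      have h5 : (B - 1) * (p * t) = D * (p * t) := by rw [hD]; simp
      omega
    omega
  -- main induction
  have main : ∀ m, m ≤ t → lam (A * t) ≤ lam (A * t - m) + (A - B) * m := by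
    intro m
    induction m with
    | zero => simp
    | succ n ih =>
      intro hn
      have hn' : n ≤ t := by omega
      have h := ih hn'
      have hAt : n + 1 ≤ A * t := le_trans hn (Nat.le_mul_of_pos_left t (by omega))
      set j := A * t - (n + 1) with hj
      have hjlt : j < A * t := by omega
      have hjge : A * t - t ≤ j := by omega
      have hj1 : j + 1 = A * t - n := by omega
      have hdle : j / (p * t) ≤ j / t := Nat.div_le_div_left
        (Nat.le_mul_of_pos_left t (by omega)) ht0
      have hstep : lam (A * t - n) = lam j + (j / t - j / (p * t)) := by
        rw [← hj1, hrec j]; omega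
      have hbd := key j hjge hjlt
      calc lam (A * t) ≤ lam (A * t - n) + (A - B) * n := h
        _ = lam j + (j / t - j / (p * t)) + (A - B) * n := by rw [hstep]
        _ ≤ lam j + (A - B) + (A - B) * n := by omega
        _ = lam j + (A - B) * (n + 1) := by ring
  have hmain := main i hi
  have htot : Nat.totient (p ^ (c + 1)) = p ^ c * (p - 1) :=
    Nat.totient_prime_pow hp (Nat.succ_pos c)
  have hcast : ((A : ℤ) - B) = (k - 1 : ℤ) * Nat.totient (p ^ (c + 1)) := by
    rw [htot, hA, hB]
    have h1 : ((k - 1 : ℕ) : ℤ) = (k : ℤ) - 1 := by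
      push_cast [Nat.cast_sub (by omega : 1 ≤ k)]; ring
    have h2 : ((p - 1 : ℕ) : ℤ) = (p : ℤ) - 1 := by
      push_cast [Nat.cast_sub (by omega : 1 ≤ p)]; ring
    push_cast [h1, h2, pow_succ]
    ring
  have hABZ : ((A - B : ℕ) : ℤ) = (A : ℤ) - B := Nat.cast_sub hBA
  have : (lam (A * t) : ℤ) ≤ lam (A * t - i) + ((A : ℤ) - B) * i := by
    calc (lam (A * t) : ℤ) ≤ ((lam (A * t - i) + (A - B) * i : ℕ) : ℤ) := by
          exact_mod_cast hmain
      _ = lam (A * t - i) + ((A : ℤ) - B) * i := by push_cast [hABZ]; ring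
  rw [← hcast]
  linarith
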